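/- arXiv:1111.2895 — 6 statements merged into one kernel-verified Lean document; each statement's English description precedes it below -/
import Mathlib

section
/- For every q ≥ 1 and n ≥ 5, the independence number of AΓ_n^q equals (n-1)!·(n!)^{q-1}/2^q. -/
/-- The set of even derangements: fixed-point-free elements of the alternating group. -/
def evenDerangements (n : ℕ) : Set (alternatingGroup (Fin n)) :=
  {σ | ∀ i : Fin n, (σ : Equiv.Perm (Fin n)) i ≠ i}

lemma evenDerangements_inv {n : ℕ} {g : alternatingGroup (Fin n)}
    (hg : g ∈ evenDerangements n) : g⁻¹ ∈ evenDerangements n := by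
  intro i hi
  apply hg i
  have h1 : ((g : Equiv.Perm (Fin n)))⁻¹ i = i := by
    simpa using hi
  conv_lhs => rw [← h1]
  simp

/-- The tensor power `AΓ_n^q` of the even derangement graph. -/
def AGamma (n q : ℕ) : SimpleGraph (Fin q → alternatingGroup (Fin n)) where
  Adj σ τ := σ ≠ τ ∧ ∀ k, σ k * (τ k)⁻¹ ∈ evenDerangements n
  symm := by
    constructor
    rintro σ τ ⟨hne, h⟩
    refine ⟨hne.symm, fun k => ?_⟩
    have := evenDerangements_inv (h k)
    simpa [mul_inv_rev] using this
  loopless := ⟨fun σ h => h.1 rfl⟩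

/-- The even derangement graph `AΓ_n`. -/
def AGammaOne (n : ℕ) : SimpleGraph (alternatingGroup (Fin n)) where
  Adj σ τ := σ ≠ τ ∧ σ * τ⁻¹ ∈ evenDerangements n
  symm := by
    constructor
    rintro σ τ ⟨hne, h⟩
    refine ⟨hne.symm, ?_⟩
    have := evenDerangements_inv h
    simpa [mul_inv_rev] using this
  loopless := ⟨fun σ h => h.1 rfl⟩

/-- The maximum independent set candidates `B_{i,j}^{(k)}`. -/
def B (n q : ℕ) (i j : Fin n) (k : Fin q) : Set (Fin q → alternatingGroup (Fin n)) :=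
  {σ | (σ k : Equiv.Perm (Fin n)) i = j}

/-- A set of vertices is independent if no two of its members are adjacent. -/
def IsIndep {V : Type*} (G : SimpleGraph V) (s : Set V) : Prop :=
  s.Pairwise fun u v => ¬ G.Adj u v


section CliqueConstruction

lemma sign_addLeft_zmod2 : Equiv.Perm.sign (Equiv.addLeft (1 : ZMod 2)) = -1 := by
  have : Equiv.addLeft (1 : ZMod 2) = Equiv.swap 0 1 := by
    ext x; revert x; decide
  rw [this, Equiv.Perm.sign_swap (by decide)]

lemma clique_transfer {T : Type} [DecidableEq T] [Fintype T] {n : ℕ} (e : T ≃ Fin n)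
    (h : T → Equiv.Perm T) (hs : ∀ t, Equiv.Perm.sign (h t) = 1)
    (hd : ∀ a b, a ≠ b → ∀ x, h a x ≠ h b x) :
    ∃ g : Fin n → Equiv.Perm (Fin n),
      (∀ a, Equiv.Perm.sign (g a) = 1) ∧ ∀ a b, a ≠ b → ∀ x, g a x ≠ g b x := by
  refine ⟨fun a => e.permCongr (h (e.symm a)), fun a => ?_, fun a b hab x => ?_⟩
  · rw [Equiv.Perm.sign_permCongr]; exact hs _
  · simp only [Equiv.permCongr_apply]
    intro hx
    exact hd _ _ (fun hh => hab (by simpa using congrArg e hh)) (e.symm x) (e.injective hx)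

lemma clique_odd (n : ℕ) (h1 : 1 ≤ n) (hodd : n % 2 = 1) :
    ∃ g : Fin n → Equiv.Perm (Fin n),
      (∀ a, Equiv.Perm.sign (g a) = 1) ∧ ∀ a b, a ≠ b → ∀ x, g a x ≠ g b x := by
  haveI : NeZero n := ⟨by omega⟩
  refine clique_transfer (Fintype.equivFinOfCardEq (ZMod.card n))
    (fun a => Equiv.addLeft a) (fun a => ?_) (fun a b hab x hx => hab ?_)
  · have hbb : ((((n+1)/2 : ℕ) : ZMod n) * a) + ((((n+1)/2 : ℕ) : ZMod n) * a) = a := by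
      rw [← two_mul, ← mul_assoc, ← Nat.cast_ofNat, ← Nat.cast_mul]
      have : 2 * ((n+1)/2) = n + 1 := by omega
      rw [this, Nat.cast_add, ZMod.natCast_self, Nat.cast_one, zero_add, one_mul]
    have : Equiv.addLeft a =
        Equiv.addLeft ((((n+1)/2 : ℕ) : ZMod n) * a) * Equiv.addLeft ((((n+1)/2 : ℕ) : ZMod n) * a) := by
      ext x
      simp only [Equiv.coe_addLeft, Equiv.Perm.mul_apply]
      rw [← add_assoc, hbb]
    show Equiv.Perm.sign (Equiv.addLeft a) = 1
    rw [this, map_mul, Int.units_mul_self]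
  · simpa using hx

lemma clique_even (m : ℕ) (hm : 3 ≤ m) {n : ℕ} (hn : n = 2 * m) :
    ∃ g : Fin n → Equiv.Perm (Fin n),
      (∀ a, Equiv.Perm.sign (g a) = 1) ∧ ∀ a b, a ≠ b → ∀ x, g a x ≠ g b x := by
  haveI : NeZero m := ⟨by omega⟩
  haveI : Fact (1 < m) := ⟨by omega⟩
  have ecard : Fintype.card (ZMod 2 × ZMod m) = n := by
    rw [Fintype.card_prod, ZMod.card, ZMod.card, hn]
  set γ : Equiv.Perm (ZMod m) := if m % 2 = 0 then 1 else Equiv.swap 0 1 with hγ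
  have hγsign : Equiv.Perm.sign γ * (-1 : ℤˣ) ^ m = 1 := by
    rcases Nat.even_or_odd m with he | ho
    · rw [hγ, if_pos (Nat.even_iff.mp he), map_one, one_mul, he.neg_one_pow]
    · rw [hγ, if_neg (by rw [Nat.odd_iff] at ho; omega : ¬ m % 2 = 0),
        Equiv.Perm.sign_swap (zero_ne_one), ho.neg_one_pow]
      decide
  have hzm2 : ∀ x : ZMod 2, x = 0 ∨ x = 1 := by decide
  have hne01 : (0 : ZMod 2) ≠ 1 := by decide
  set τ : ZMod m → ZMod 2 → Equiv.Perm (ZMod m) :=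
    fun a x => Equiv.addLeft a * (if x = 1 then γ else 1) with hτ
  set row : ZMod 2 × ZMod m → Equiv.Perm (ZMod 2 × ZMod m) := fun c =>
    if c.1 = 0 then Equiv.prodCongrRight (fun _ => Equiv.addLeft c.2)
    else Equiv.prodCongrRight (τ c.2) * Equiv.prodCongrLeft (fun _ : ZMod m => Equiv.addLeft (1 : ZMod 2))
    with hrow
  refine clique_transfer (Fintype.equivFinOfCardEq ecard) row (fun c => ?_) (fun a b hab x hx => ?_)
  · rcases hzm2 c.1 with h0 | h1
    · have hc : row c = Equiv.prodCongrRight (fun _ : ZMod 2 => Equiv.addLeft c.2) := if_pos h0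
      rw [hc, Equiv.Perm.sign_prodCongrRight, Finset.prod_const, Finset.card_univ, ZMod.card, Int.units_sq]
    · have hc : row c = Equiv.prodCongrRight (τ c.2) *
          Equiv.prodCongrLeft (fun _ : ZMod m => Equiv.addLeft (1 : ZMod 2)) :=
        if_neg (h1 ▸ hne01.symm)
      rw [hc, map_mul, Equiv.Perm.sign_prodCongrRight, Equiv.Perm.sign_prodCongrLeft]
      have hτs : ∀ x : ZMod 2, Equiv.Perm.sign (τ c.2 x)
          = Equiv.Perm.sign (Equiv.addLeft c.2) * (if x = 1 then Equiv.Perm.sign γ else 1) := by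
        intro x
        rw [hτ]
        show Equiv.Perm.sign (Equiv.addLeft c.2 * if x = 1 then γ else 1) = _
        rw [map_mul]
        congr 1
        split <;> simp
      rw [Finset.prod_congr rfl (fun x _ => hτs x), Finset.prod_mul_distrib,
        Finset.prod_const, Finset.card_univ, ZMod.card, Int.units_sq, one_mul,
        Finset.prod_ite_eq' Finset.univ (1 : ZMod 2) (fun _ => Equiv.Perm.sign γ),
        if_pos (Finset.mem_univ _), Finset.prod_const, Finset.card_univ, ZMod.card, sign_addLeft_zmod2]
      exact hγsign
  · have hr0 : ∀ c : ZMod 2 × ZMod m, c.1 = 0 → ∀ y : ZMod 2 × ZMod m,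
        row c y = (y.1, c.2 + y.2) := by
      intro c h0 y
      have hc : row c = Equiv.prodCongrRight (fun _ : ZMod 2 => Equiv.addLeft c.2) := if_pos h0
      rw [hc]; rfl
    have hr1 : ∀ c : ZMod 2 × ZMod m, c.1 = 1 → ∀ y : ZMod 2 × ZMod m,
        row c y = (1 + y.1, (τ c.2 (1 + y.1)) y.2) := by
      intro c h1 y
      have hc : row c = Equiv.prodCongrRight (τ c.2) *
          Equiv.prodCongrLeft (fun _ : ZMod m => Equiv.addLeft (1 : ZMod 2)) :=
        if_neg (h1 ▸ hne01.symm)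
      rw [hc]; rfl
    have hy2 : ∀ y : ZMod 2, y ≠ 1 + y := by decide
    have hτapp : ∀ (v : ZMod m) (y : ZMod 2) (w : ZMod m),
        (τ v y) w = v + ((if y = 1 then γ else 1) w) := by
      intro v y w; rfl
    rcases hzm2 a.1 with ha | ha <;> rcases hzm2 b.1 with hb | hb
    · rw [hr0 a ha x, hr0 b hb x] at hx
      exact hab (Prod.ext_iff.mpr ⟨ha.trans hb.symm,
        add_right_cancel ((Prod.ext_iff.mp hx).2)⟩)
    · rw [hr0 a ha x, hr1 b hb x] at hx
      exact hy2 x.1 (Prod.ext_iff.mp hx).1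
    · rw [hr1 a ha x, hr0 b hb x] at hx
      exact hy2 x.1 ((Prod.ext_iff.mp hx).1).symm
    · rw [hr1 a ha x, hr1 b hb x] at hx
      have h2 := (Prod.ext_iff.mp hx).2
      rw [hτapp, hτapp] at h2
      exact hab (Prod.ext_iff.mpr ⟨ha.trans hb.symm, add_right_cancel h2⟩)

lemma clique_exists (n : ℕ) (hn : 5 ≤ n) :
    ∃ g : Fin n → Equiv.Perm (Fin n),
      (∀ a, Equiv.Perm.sign (g a) = 1) ∧ ∀ a b, a ≠ b → ∀ x, g a x ≠ g b x := by
  rcases Nat.even_or_odd n with he | ho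
  · obtain ⟨m, hm⟩ := he
    exact clique_even m (by omega) (by omega)
  · exact clique_odd n (by omega) (Nat.odd_iff.mp ho)

lemma stab_card (n : ℕ) (hn : 5 ≤ n) (i : Fin n) :
    n * Nat.card {g : alternatingGroup (Fin n) // (g : Equiv.Perm (Fin n)) i = i}
      = Nat.card (alternatingGroup (Fin n)) := by
  haveI : Nontrivial (Fin n) := ⟨⟨⟨0, by omega⟩, ⟨1, by omega⟩, by simp [Fin.ext_iff]⟩⟩
  haveI : Fintype (MulAction.orbit (alternatingGroup (Fin n)) i) := Fintype.ofFinite _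
  have horb : MulAction.orbit (alternatingGroup (Fin n)) i = Set.univ := by
    rw [Set.eq_univ_iff_forall]
    intro j
    by_cases hij : i = j
    · exact ⟨1, by simp [hij]⟩
    · have hcard : 1 < ({i, j}ᶜ : Finset (Fin n)).card := by
        rw [Finset.card_compl]
        have h1 : ({i, j} : Finset (Fin n)).card ≤ 2 := Finset.card_insert_le _ _ |>.trans (by simp)
        have h2 : Fintype.card (Fin n) = n := Fintype.card_fin n
        omega
      obtain ⟨k, hk, l, hl, hkl⟩ := Finset.one_lt_card.mp hcard
      simp only [Finset.mem_compl, Finset.mem_insert, Finset.mem_singleton, not_or] at hk hl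
      refine ⟨⟨Equiv.swap k l * Equiv.swap i j, ?_⟩, ?_⟩
      · rw [Equiv.Perm.mem_alternatingGroup, map_mul,
          Equiv.Perm.sign_swap hkl, Equiv.Perm.sign_swap (by exact hij)]
        decide
      · show (Equiv.swap k l * Equiv.swap i j) • i = j
        rw [Equiv.Perm.smul_def, Equiv.Perm.mul_apply, Equiv.swap_apply_left,
          Equiv.swap_apply_of_ne_of_ne (fun h => hk.2 h.symm) (fun h => hl.2 h.symm)]
  have hmain := MulAction.card_orbit_mul_card_stabilizer_eq_card_group (G := alternatingGroup (Fin n)) i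
  have hcorb : Fintype.card (MulAction.orbit (alternatingGroup (Fin n)) i) = n := by
    rw [Fintype.card_congr ((Equiv.setCongr horb).trans (Equiv.Set.univ _)), Fintype.card_fin]
  rw [hcorb] at hmain
  have hstab : Nat.card {g : alternatingGroup (Fin n) // (g : Equiv.Perm (Fin n)) i = i}
      = Fintype.card (MulAction.stabilizer (alternatingGroup (Fin n)) i) := by
    rw [← Nat.card_eq_fintype_card]
    apply Nat.card_congr
    exact Equiv.subtypeEquivRight (fun g => by
      simp [MulAction.mem_stabilizer_iff, Subgroup.smul_def, Equiv.Perm.smul_def])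
  rw [hstab, Nat.card_eq_fintype_card]
  exact hmain

end CliqueConstruction

lemma B_card (n q : ℕ) (i : Fin n) (k : Fin q) :
    (B n q i i k).ncard
      = Nat.card {g : alternatingGroup (Fin n) // (g : Equiv.Perm (Fin n)) i = i}
        * Nat.card (alternatingGroup (Fin n)) ^ (q - 1) := by
  classical
  rw [← Nat.card_coe_set_eq]
  have E : ↥(B n q i i k) ≃
      {g : alternatingGroup (Fin n) // (g : Equiv.Perm (Fin n)) i = i}
        × ({j : Fin q // ¬ j = k} → alternatingGroup (Fin n)) :=
    { toFun := fun σ => (⟨σ.1 k, σ.2⟩, fun j => σ.1 j.1)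
      invFun := fun p => ⟨fun j => if h : j = k then p.1.1 else p.2 ⟨j, h⟩, by
        show ((if h : k = k then p.1.1 else p.2 ⟨k, h⟩ : alternatingGroup (Fin n))
          : Equiv.Perm (Fin n)) i = i
        rw [dif_pos rfl]
        exact p.1.2⟩
      left_inv := fun σ => Subtype.ext (funext fun j => by
        by_cases h : j = k
        · subst h; simp
        · simp [h])
      right_inv := fun p => by
        refine Prod.ext_iff.mpr ⟨Subtype.ext ?_, funext fun j => ?_⟩
        · simp
        · simp [j.2] }
  rw [Nat.card_congr E, Nat.card_prod]
  congr 1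
  rw [Nat.card_eq_fintype_card, Fintype.card_fun, Nat.card_eq_fintype_card]
  congr 1
  rw [Fintype.card_subtype_compl, Fintype.card_subtype_eq, Fintype.card_fin]

lemma B_indep (n q : ℕ) (i : Fin n) (k : Fin q) : IsIndep (AGamma n q) (B n q i i k) := by
  intro u hu v hv huv hadj
  have h1 : (↑(u k * (v k)⁻¹) : Equiv.Perm (Fin n)) i ≠ i :=
    (show u ≠ v ∧ ∀ k, u k * (v k)⁻¹ ∈ evenDerangements n from hadj).2 k i
  apply h1
  have hvk : ((v k : Equiv.Perm (Fin n)))⁻¹ i = i := by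
    conv_lhs => rw [← hv]
    exact Equiv.symm_apply_apply _ _
  show ((u k : Equiv.Perm (Fin n)) * ((v k : Equiv.Perm (Fin n)))⁻¹) i = i
  rw [Equiv.Perm.mul_apply, hvk, hu]

lemma indep_le (n q : ℕ) (hq : 1 ≤ q) (hn : 5 ≤ n)
    (I : Set (Fin q → alternatingGroup (Fin n))) (hI : IsIndep (AGamma n q) I) :
    I.ncard * n ≤ Nat.card (alternatingGroup (Fin n)) ^ q := by
  classical
  obtain ⟨g, hs, hd⟩ := clique_exists n hn
  set c : Fin n → alternatingGroup (Fin n) :=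
    fun a => ⟨g a, Equiv.Perm.mem_alternatingGroup.mpr (hs a)⟩ with hc
  set f : ↥I × Fin n → (Fin q → alternatingGroup (Fin n)) :=
    fun p => fun k => (c p.2)⁻¹ * (p.1.1 k) with hf
  have hinj : Function.Injective f := by
    rintro ⟨⟨x, hx⟩, a⟩ ⟨⟨y, hy⟩, b⟩ h
    have hk : ∀ k, (c a)⁻¹ * x k = (c b)⁻¹ * y k := fun k => congrFun h k
    by_cases hab : a = b
    · subst hab
      exact Prod.ext_iff.mpr ⟨Subtype.ext (funext fun k => mul_left_cancel (hk k)), rfl⟩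
    · exfalso
      have hxyk : ∀ k, x k * (y k)⁻¹ = c a * (c b)⁻¹ := by
        intro k
        have h1 : x k = c a * ((c b)⁻¹ * y k) := by rw [← hk k, mul_inv_cancel_left]
        rw [h1]; group
      have hED : c a * (c b)⁻¹ ∈ evenDerangements n := by
        intro v hv
        have hco : (↑(c a * (c b)⁻¹) : Equiv.Perm (Fin n)) = g a * (g b)⁻¹ := rfl
        rw [hco, Equiv.Perm.mul_apply] at hv
        exact hd a b hab ((g b)⁻¹ v) (by rw [hv]; exact (Equiv.apply_symm_apply _ _).symm)
      have hxy : x ≠ y := by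
        intro he
        subst he
        have h1 : c a * (c b)⁻¹ = 1 := by
          rw [← hxyk ⟨0, hq⟩]; group
        have h2 := hED ⟨0, by omega⟩
        rw [h1] at h2
        exact h2 rfl
      exact hI hx hy hxy (⟨hxy, fun k => (hxyk k) ▸ hED⟩ :
          x ≠ y ∧ ∀ k, x k * (y k)⁻¹ ∈ evenDerangements n)
  have hcard := Nat.card_le_card_of_injective f hinj
  rw [Nat.card_prod, Nat.card_eq_fintype_card (α := Fin n), Fintype.card_fin,
    Nat.card_coe_set_eq] at hcard
  rw [Nat.card_eq_fintype_card, Fintype.card_fun, Fintype.card_fin,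
    ← Nat.card_eq_fintype_card] at hcard
  exact hcard

theorem indepNum_AGamma_pow' (n q : ℕ) (hq : 1 ≤ q) (hn : 5 ≤ n) :
    IsGreatest {m : ℕ | ∃ I : Set (Fin q → alternatingGroup (Fin n)),
        IsIndep (AGamma n q) I ∧ I.ncard = m}
      (Nat.factorial (n - 1) * (Nat.factorial n) ^ (q - 1) / 2 ^ q) := by
  haveI : Nontrivial (Fin n) := ⟨⟨⟨0, by omega⟩, ⟨1, by omega⟩, by simp [Fin.ext_iff]⟩⟩
  set i0 : Fin n := ⟨0, by omega⟩
  set k0 : Fin q := ⟨0, by omega⟩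
  set A := Nat.card (alternatingGroup (Fin n)) with hA
  set S := Nat.card {g : alternatingGroup (Fin n) // (g : Equiv.Perm (Fin n)) i0 = i0} with hSdef
  have hS : n * S = A := stab_card n hn i0
  have h2A : 2 * A = n.factorial := by
    rw [hA, Nat.card_eq_fintype_card, two_mul_card_alternatingGroup,
      Fintype.card_perm, Fintype.card_fin]
  have hfac : (n - 1).factorial = 2 * S := by
    have hn' : n.factorial = n * (n - 1).factorial := by
      have h : n - 1 + 1 = n := by omega
      rw [← h, Nat.factorial_succ, h]
    have hmul : n * (2 * S) = n * (n - 1).factorial := by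
      rw [← hn', ← h2A, ← hS]; ring
    exact (Nat.eq_of_mul_eq_mul_left (by omega) hmul).symm
  have hT : (n - 1).factorial * n.factorial ^ (q - 1) / 2 ^ q = S * A ^ (q - 1) := by
    rw [hfac, ← h2A]
    have h1 : 2 * S * (2 * A) ^ (q - 1) = 2 ^ q * (S * A ^ (q - 1)) := by
      rw [mul_pow, show (2 : ℕ) ^ q = 2 * 2 ^ (q - 1) from by
        rw [← pow_succ']; congr 1; omega]
      ring
    rw [h1, Nat.mul_div_cancel_left _ (pow_pos (by norm_num) q)]
  have hAq : A ^ q = n * (S * A ^ (q - 1)) := by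
    have h1 : A ^ q = A * A ^ (q - 1) := by
      rw [← pow_succ']; congr 1; omega
    rw [h1, ← hS]; ring
  constructor
  · refine ⟨B n q i0 i0 k0, B_indep n q i0 k0, ?_⟩
    rw [B_card n q i0 k0, hT]
  · rintro m ⟨I, hI, rfl⟩
    rw [hT]
    have key := indep_le n q hq hn I hI
    rw [hAq] at key
    have : n * I.ncard ≤ n * (S * A ^ (q - 1)) := by
      rw [mul_comm n I.ncard]; exact key
    exact Nat.le_of_mul_le_mul_left this (by omega)

/-- the independence number of `AΓ_n^q` is `(n-1)!·(n!)^{q-1}/2^q`. -/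
theorem indepNum_AGamma_pow (n q : ℕ) (hq : 1 ≤ q) (hn : 5 ≤ n) :
    IsGreatest {m : ℕ | ∃ I : Set (Fin q → alternatingGroup (Fin n)),
        IsIndep (AGamma n q) I ∧ I.ncard = m}
      (Nat.factorial (n - 1) * (Nat.factorial n) ^ (q - 1) / 2 ^ q) := by
  exact indepNum_AGamma_pow' n q hq hn
end

section
/- For every q ≥ 1 and n ≥ 5, the graph AΓ_n^q is connected. -/
lemma evenDerangements_conj {n : ℕ} {g : alternatingGroup (Fin n)}
    (x : alternatingGroup (Fin n)) (hg : g ∈ evenDerangements n) :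
    x * g * x⁻¹ ∈ evenDerangements n := by
  intro i hi
  apply hg ((x : Equiv.Perm (Fin n))⁻¹ i)
  apply (x : Equiv.Perm (Fin n)).injective
  rw [show (x : Equiv.Perm (Fin n)) ((x : Equiv.Perm (Fin n))⁻¹ i) = i from
    (x : Equiv.Perm (Fin n)).apply_symm_apply i]
  simpa [Equiv.Perm.mul_apply] using hi

lemma exists_special_derangement (n : ℕ) (hn : 5 ≤ n) :
    ∃ d : alternatingGroup (Fin n), d ∈ evenDerangements n ∧ d * d ∈ evenDerangements n ∧
      Subgroup.closure (evenDerangements n) = ⊤ := by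
  haveI : NeZero n := ⟨by omega⟩
  have h1v : ((1 : Fin n)).val = 1 := by rw [Fin.val_one', Nat.mod_eq_of_lt (by omega)]
  have h2v : ((2 : Fin n)).val = 2 := by
    have e : (2 : Fin n) = 1 + 1 := Fin.ext (by rw [Fin.val_add, h1v]; simp)
    rw [e, Fin.val_add, h1v, Nat.mod_eq_of_lt (by omega)]
  have hfr : ∀ x : Fin n, ((finRotate n) ^ 2) x = x + 2 := by
    intro x
    rcases n with _ | m
    · omega
    · rw [pow_two, Equiv.Perm.mul_apply, finRotate_succ_apply, finRotate_succ_apply, add_assoc]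
      congr 1
      exact Fin.ext (by simp [Fin.val_add])
  have hadd : ∀ (c : Fin n), c.val ≠ 0 → ∀ x : Fin n, x + c ≠ x := by
    intro c hc x h
    apply hc
    have h' : x + c = x + 0 := by simpa using h
    have := add_left_cancel h'
    simp [this]
  have hd1sign : (finRotate n) ^ 2 ∈ alternatingGroup (Fin n) := by
    rw [Equiv.Perm.mem_alternatingGroup, map_pow, Int.units_sq]
  refine ⟨⟨(finRotate n) ^ 2, hd1sign⟩, ?_, ?_, ?_⟩
  · intro i
    show ((finRotate n) ^ 2) i ≠ i
    rw [hfr]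
    exact hadd 2 (by omega) i
  · intro i
    show ((finRotate n) ^ 2) (((finRotate n) ^ 2) i) ≠ i
    rw [hfr, hfr, add_assoc]
    apply hadd
    rw [Fin.val_add, h2v, Nat.mod_eq_of_lt (by omega)]
    omega
  -- main generation statement
  have h01 : (0 : Fin n) ≠ 1 := by
    intro h; have := congrArg Fin.val h; rw [Fin.val_zero, h1v] at this; omega
  have h02 : (0 : Fin n) ≠ 2 := by
    intro h; have := congrArg Fin.val h; rw [Fin.val_zero, h2v] at this; omega
  have h21 : (2 : Fin n) ≠ 1 := by
    intro h; have := congrArg Fin.val h; rw [h2v, h1v] at this; omega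
  set t : Equiv.Perm (Fin n) := Equiv.swap 0 2 * Equiv.swap 0 1 with ht
  have h3 : Equiv.Perm.IsThreeCycle t :=
    Equiv.Perm.isThreeCycle_swap_mul_swap_same h02 h01 h21
  have hta : t 0 = 1 := by
    rw [ht, Equiv.Perm.mul_apply, Equiv.swap_apply_left,
      Equiv.swap_apply_of_ne_of_ne h01.symm h21.symm]
  have htb : t 1 = 2 := by
    rw [ht, Equiv.Perm.mul_apply, Equiv.swap_apply_right, Equiv.swap_apply_left]
  have htc : t 2 = 0 := by
    rw [ht, Equiv.Perm.mul_apply, Equiv.swap_apply_of_ne_of_ne h02.symm h21,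
      Equiv.swap_apply_right]
  have htother : ∀ x : Fin n, x ≠ 0 → x ≠ 1 → x ≠ 2 → t x = x := by
    intro x hx0 hx1 hx2
    rw [ht, Equiv.Perm.mul_apply, Equiv.swap_apply_of_ne_of_ne hx0 hx1,
      Equiv.swap_apply_of_ne_of_ne hx0 hx2]
  have haddval : ∀ x : Fin n, (x + 2).val = (x.val + 2) % n := by
    intro x; rw [Fin.val_add, h2v]
  have hd2sign : ((finRotate n) ^ 2)⁻¹ * t ∈ alternatingGroup (Fin n) := by
    rw [Equiv.Perm.mem_alternatingGroup, map_mul, map_inv, h3.sign]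
    rw [Equiv.Perm.mem_alternatingGroup] at hd1sign
    rw [hd1sign]
    simp
  set d2p : Equiv.Perm (Fin n) := ((finRotate n) ^ 2)⁻¹ * t with hd2p
  have hd2 : (⟨d2p, hd2sign⟩ : alternatingGroup (Fin n)) ∈ evenDerangements n := by
    intro x hx
    have hx' : t x = ((finRotate n) ^ 2) x := by
      have : (((finRotate n) ^ 2)⁻¹) (t x) = x := hx
      rw [Equiv.Perm.inv_eq_iff_eq] at this
      rw [this]
    rw [hfr] at hx'
    by_cases hx0 : x = 0
    · subst hx0
      rw [hta] at hx'
      have := congrArg Fin.val hx'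
      rw [h1v, haddval, Fin.val_zero, Nat.mod_eq_of_lt (by omega)] at this
      omega
    · by_cases hx1 : x = 1
      · subst hx1
        rw [htb] at hx'
        have := congrArg Fin.val hx'
        rw [h2v, haddval, h1v, Nat.mod_eq_of_lt (by omega)] at this
        omega
      · by_cases hx2 : x = 2
        · subst hx2
          rw [htc] at hx'
          have := congrArg Fin.val hx'
          rw [Fin.val_zero, haddval, h2v, Nat.mod_eq_of_lt (by omega)] at this
          omega
        · rw [htother x hx0 hx1 hx2] at hx'
          exact hadd 2 (by omega) x hx'.symm
  have hd1mem : (⟨(finRotate n) ^ 2, hd1sign⟩ : alternatingGroup (Fin n)) ∈ evenDerangements n := by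
    intro i
    show ((finRotate n) ^ 2) i ≠ i
    rw [hfr]
    exact hadd 2 (by omega) i
  have hfact : (⟨t, h3.mem_alternatingGroup⟩ : alternatingGroup (Fin n)) =
      ⟨(finRotate n) ^ 2, hd1sign⟩ * ⟨d2p, hd2sign⟩ := by
    apply Subtype.ext
    show t = (finRotate n) ^ 2 * (((finRotate n) ^ 2)⁻¹ * t)
    rw [mul_inv_cancel_left]
  have htmem : (⟨t, h3.mem_alternatingGroup⟩ : alternatingGroup (Fin n)) ∈
      Subgroup.closure (evenDerangements n) := by
    rw [hfact]
    exact mul_mem (Subgroup.subset_closure hd1mem) (Subgroup.subset_closure hd2)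
  haveI hnormal : (Subgroup.closure (evenDerangements n)).Normal := by
    constructor
    intro g hg x
    refine Subgroup.closure_induction
      (fun y hy => Subgroup.subset_closure (evenDerangements_conj x hy)) ?_ ?_ ?_ hg
    · simpa using one_mem _
    · intro y z _ _ hy hz
      have : x * (y * z) * x⁻¹ = (x * y * x⁻¹) * (x * z * x⁻¹) := by group
      rw [this]
      exact mul_mem hy hz
    · intro y _ hy
      have : x * y⁻¹ * x⁻¹ = (x * y * x⁻¹)⁻¹ := by group
      rw [this]
      exact inv_mem hy
  rw [eq_top_iff, ← h3.alternating_normalClosure (by rw [Nat.card_fin]; exact hn)]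
  exact Subgroup.normalClosure_le_normal (Set.singleton_subset_iff.2 htmem)

lemma exists_factorization (n : ℕ) (hn : 5 ≤ n) (g : alternatingGroup (Fin n)) :
    ∃ N : ℕ, ∀ m, N ≤ m → ∃ l : List (alternatingGroup (Fin n)),
      l.length = m ∧ (∀ x ∈ l, x ∈ evenDerangements n) ∧ l.prod = g := by
  obtain ⟨d, hd, hdd, htop⟩ := exists_special_derangement n hn
  have hg : g ∈ Subgroup.closure (evenDerangements n) := htop ▸ Subgroup.mem_top g
  have hg' : g ∈ Submonoid.closure (evenDerangements n ∪ (evenDerangements n)⁻¹) := by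
    rw [← Subgroup.closure_toSubmonoid]; exact hg
  obtain ⟨l, hl, hlp⟩ := Submonoid.exists_list_of_mem_closure hg'
  have hl' : ∀ x ∈ l, x ∈ evenDerangements n := by
    intro x hx
    rcases hl x hx with h | h
    · exact h
    · have := evenDerangements_inv (Set.mem_inv.mp h)
      simpa using this
  suffices h : ∀ j, ∃ L : List (alternatingGroup (Fin n)),
      L.length = l.length + (2 + j) ∧ (∀ x ∈ L, x ∈ evenDerangements n) ∧ L.prod = g by
    refine ⟨l.length + 2, fun m hm => ?_⟩
    obtain ⟨L, h1, h2, h3⟩ := h (m - (l.length + 2))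
    exact ⟨L, by omega, h2, h3⟩
  intro j
  induction j using Nat.strong_induction_on with
  | _ j ih =>
    match j with
    | 0 =>
      refine ⟨l ++ [d, d⁻¹], by simp, ?_, by simp [hlp]⟩
      intro x hx
      rcases List.mem_append.mp hx with h | h
      · exact hl' x h
      · simp at h
        rcases h with h | h
        · rw [h]; exact hd
        · rw [h]; exact evenDerangements_inv hd
    | 1 =>
      refine ⟨l ++ [d, d, (d * d)⁻¹], by simp, ?_, ?_⟩
      · intro x hx
        rcases List.mem_append.mp hx with h | h
        · exact hl' x h
        · simp only [List.mem_cons, List.not_mem_nil, or_false] at h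
          rcases h with h | h | h
          · rw [h]; exact hd
          · rw [h]; exact hd
          · rw [h]; exact evenDerangements_inv hdd
      · rw [List.prod_append, hlp]
        simp [mul_assoc]
    | (j + 2) =>
      obtain ⟨L, h1, h2, h3⟩ := ih j (by omega)
      refine ⟨L ++ [d, d⁻¹], by simp [h1]; omega, ?_, by simp [h3]⟩
      intro x hx
      rcases List.mem_append.mp hx with h | h
      · exact h2 x h
      · simp at h
        rcases h with h | h
        · rw [h]; exact hd
        · rw [h]; exact evenDerangements_inv hd

lemma reach_aux (n q : ℕ) (hq : 1 ≤ q) (hn : 5 ≤ n) :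
    ∀ (M : ℕ) (l : Fin q → List (alternatingGroup (Fin n))),
      (∀ k, (l k).length = M) → (∀ k, ∀ x ∈ l k, x ∈ evenDerangements n) →
      (AGamma n q).Reachable 1 (fun k => (l k).prod) := by
  intro M
  induction M with
  | zero =>
    intro l h1 h2
    have : (fun k => (l k).prod) = (1 : Fin q → alternatingGroup (Fin n)) := by
      funext k
      rw [List.length_eq_zero_iff.mp (h1 k)]
      rfl
    rw [this]
  | succ M ih =>
    intro l h1 h2
    have hne : ∀ k, l k ≠ [] := by
      intro k h
      have := h1 k
      rw [h] at this
      simp at this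
    set g : Fin q → alternatingGroup (Fin n) := fun k => (l k).getLast (hne k) with hgdef
    have hgmem : ∀ k, g k ∈ evenDerangements n := fun k =>
      h2 k _ (List.getLast_mem (hne k))
    set l' : Fin q → List (alternatingGroup (Fin n)) := fun k => (l k).dropLast with hl'def
    have hsplit : ∀ k, (l k).prod = (l' k).prod * g k := by
      intro k
      conv_lhs => rw [← List.dropLast_append_getLast (hne k)]
      rw [List.prod_append, List.prod_singleton]
    have h1' : ∀ k, (l' k).length = M := by
      intro k
      show ((l k).dropLast).length = M
      rw [List.length_dropLast, h1 k]
      omega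
    have h2' : ∀ k, ∀ x ∈ l' k, x ∈ evenDerangements n := fun k x hx =>
      h2 k x (List.dropLast_subset _ hx)
    refine (ih l' h1' h2').trans (SimpleGraph.Adj.reachable ?_)
    have hDmem : ∀ k, (l' k).prod * ((l k).prod)⁻¹ ∈ evenDerangements n := by
      intro k
      rw [hsplit k, mul_inv_rev, ← mul_assoc]
      exact evenDerangements_conj _ (evenDerangements_inv (hgmem k))
    refine (⟨?_, hDmem⟩ : _ ∧ _)
    intro hEq
    have hk := congrFun hEq ⟨0, hq⟩
    have := hDmem ⟨0, hq⟩
    rw [hk] at this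
    simp only [mul_inv_cancel] at this
    have h5 : (0 : ℕ) < n := by omega
    exact this ⟨0, h5⟩ rfl

/-- `AΓ_n^q` is connected for `q ≥ 1`, `n ≥ 5`. -/
theorem AGamma_pow_connected (n q : ℕ) (hq : 1 ≤ q) (hn : 5 ≤ n) :
    (AGamma n q).Connected := by
  have key : ∀ σ, (AGamma n q).Reachable 1 σ := by
    intro σ
    choose N hN using fun k => exists_factorization n hn (σ k)
    have hle : ∀ k, N k ≤ Finset.univ.sup N := fun k => Finset.le_sup (Finset.mem_univ k)
    choose l h1 h2 h3 using fun k => hN k (Finset.univ.sup N) (hle k)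
    have := reach_aux n q hq hn (Finset.univ.sup N) l h1 h2
    rwa [show (fun k => (l k).prod) = σ from funext h3] at this
  exact ⟨fun u v => (key u).symm.trans (key v)⟩
end

section
/- For n ≥ 5 and any g₁, g₂ ∈ A_n, there exists g ∈ A_n that is a common neighbor of g₁ and g₂ in the even derangement graph AΓ_n; that is, there exists g ∈ A_n with g·g₁⁻¹ ∈ ℰ_n and g·g₂⁻¹ ∈ ℰ_n. -/
open Finset Equiv

set_option maxRecDepth 10000 in
lemma five_aux : ∀ u : Equiv.Perm (Fin 5), ∃ h : Equiv.Perm (Fin 5),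
    h.sign = 1 ∧ ∀ k, h k ≠ k ∧ h k ≠ u k := by decide

lemma exists_avoiding (n : ℕ) (hn : 5 ≤ n) (u : Equiv.Perm (Fin n)) :
    ∃ h : Equiv.Perm (Fin n), ∀ k, h k ≠ k ∧ h k ≠ u k := by
  classical
  set t : Fin n → Finset (Fin n) := fun j => ({j, u j} : Finset (Fin n))ᶜ with ht
  have hcard : ∀ j, n - 2 ≤ (t j).card := by
    intro j
    have h2 : ({j, u j} : Finset (Fin n)).card ≤ 2 := (card_insert_le _ _).trans (by simp)
    have := Finset.card_compl ({j, u j} : Finset (Fin n))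
    simp only [ht, this, Fintype.card_fin]
    omega
  have hall : ∀ s : Finset (Fin n), s.card ≤ (s.biUnion t).card := by
    intro s
    rcases s.eq_empty_or_nonempty with rfl | ⟨j, hj⟩
    · simp
    by_cases hc : s.card ≤ n - 2
    · calc s.card ≤ (t j).card := hc.trans (hcard j)
        _ ≤ (s.biUnion t).card := card_le_card (subset_biUnion_of_mem t hj)
    · have hs : n - 1 ≤ s.card := by omega
      have : s.biUnion t = univ := by
        apply eq_univ_of_forall
        intro k
        have hsub : ¬ s ⊆ ({k, u.symm k} : Finset (Fin n)) := by
          intro hsubs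
          have := card_le_card hsubs
          have h2 : ({k, u.symm k} : Finset (Fin n)).card ≤ 2 :=
            (card_insert_le _ _).trans (by simp)
          omega
        obtain ⟨j', hj', hj'2⟩ := not_subset.mp hsub
        refine mem_biUnion.mpr ⟨j', hj', ?_⟩
        simp only [ht, mem_compl, mem_insert, mem_singleton] at hj'2 ⊢
        push_neg at hj'2 ⊢
        refine ⟨fun hkj => hj'2.1 hkj.symm, fun hku => hj'2.2 ?_⟩
        rw [hku]; simp
      rw [this]
      simpa using card_le_card (subset_univ s)
  obtain ⟨f, hfinj, hft⟩ := (Finset.all_card_le_biUnion_card_iff_exists_injective t).mp hall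
  refine ⟨Equiv.ofBijective f (Finite.injective_iff_bijective.mp hfinj), fun k => ?_⟩
  have := hft k
  simp only [ht, mem_compl, mem_insert, mem_singleton] at this
  push_neg at this
  exact ⟨this.1, this.2⟩

lemma exists_even_avoiding (n : ℕ) (hn : 5 ≤ n) (u : Equiv.Perm (Fin n)) :
    ∃ h : Equiv.Perm (Fin n), h.sign = 1 ∧ ∀ k, h k ≠ k ∧ h k ≠ u k := by
  classical
  rcases eq_or_lt_of_le hn with h5 | h6
  · subst h5
    exact five_aux u
  obtain ⟨h, hh⟩ := exists_avoiding n hn u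
  rcases Int.units_eq_one_or h.sign with hs | hs
  · exact ⟨h, hs, hh⟩
  have hnpos : 0 < n := by omega
  set i : Fin n := ⟨0, hnpos⟩ with hi
  set S : Finset (Fin n) := {i, h.symm i, h.symm (u i), h i, u.symm (h i)} with hSdef
  have h5c : S.card ≤ 5 := by
    have c1 := card_insert_le i ({h.symm i, h.symm (u i), h i, u.symm (h i)} : Finset (Fin n))
    have c2 := card_insert_le (h.symm i) ({h.symm (u i), h i, u.symm (h i)} : Finset (Fin n))
    have c3 := card_insert_le (h.symm (u i)) ({h i, u.symm (h i)} : Finset (Fin n))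
    have c4 := card_insert_le (h i) ({u.symm (h i)} : Finset (Fin n))
    simp only [hSdef, card_singleton] at *
    omega
  obtain ⟨i', hi'⟩ : ∃ i', i' ∉ S := by
    by_contra hcon
    push_neg at hcon
    have hsub : (univ : Finset (Fin n)) ⊆ S := fun x _ => hcon x
    have := card_le_card hsub
    rw [card_univ, Fintype.card_fin] at this
    omega
  simp only [hSdef, mem_insert, mem_singleton] at hi'
  push_neg at hi'
  obtain ⟨e1, e2, e3, e4, e5⟩ := hi'
  refine ⟨h * Equiv.swap i i', ?_, ?_⟩
  · rw [map_mul, hs, Equiv.Perm.sign_swap (Ne.symm e1)]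
    simp
  · intro k
    simp only [Equiv.Perm.mul_apply]
    rcases eq_or_ne k i with rfl | hki
    · rw [Equiv.swap_apply_left]
      constructor
      · intro he; exact e2 (by rw [← he]; simp)
      · intro he; exact e3 (by rw [← he]; simp)
    rcases eq_or_ne k i' with rfl | hki'
    · rw [Equiv.swap_apply_right]
      constructor
      · intro he; exact e4 he.symm
      · intro he; exact e5 (by rw [he]; simp)
    · rw [Equiv.swap_apply_of_ne_of_ne hki hki']
      exact hh k


/-- any two vertices of `AΓ_n` (n ≥ 5) have a common neighbor. -/
theorem AGamma_common_neighbor (n : ℕ) (hn : 5 ≤ n) (g₁ g₂ : alternatingGroup (Fin n)) :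
    ∃ g : alternatingGroup (Fin n),
      g * g₁⁻¹ ∈ evenDerangements n ∧ g * g₂⁻¹ ∈ evenDerangements n := by
  classical
  set u : Equiv.Perm (Fin n) := (g₂ : Equiv.Perm (Fin n)) * (g₁ : Equiv.Perm (Fin n))⁻¹ with hu
  obtain ⟨h, hsign, hh⟩ := exists_even_avoiding n hn u
  have hmem : h * (g₁ : Equiv.Perm (Fin n)) ∈ alternatingGroup (Fin n) := by
    rw [Equiv.Perm.mem_alternatingGroup, map_mul, hsign, one_mul]
    exact Equiv.Perm.mem_alternatingGroup.mp g₁.2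
  refine ⟨⟨h * (g₁ : Equiv.Perm (Fin n)), hmem⟩, ?_, ?_⟩
  · have hcoe : ((⟨h * (g₁ : Equiv.Perm (Fin n)), hmem⟩ * g₁⁻¹ :
        alternatingGroup (Fin n)) : Equiv.Perm (Fin n)) = h := by
      push_cast
      simp [mul_assoc]
    simp only [evenDerangements, Set.mem_setOf_eq, hcoe]
    exact fun i => (hh i).1
  · have hcoe : ((⟨h * (g₁ : Equiv.Perm (Fin n)), hmem⟩ * g₂⁻¹ :
        alternatingGroup (Fin n)) : Equiv.Perm (Fin n)) = h * u⁻¹ := by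
      push_cast
      simp [hu, mul_assoc, mul_inv_rev]
    simp only [evenDerangements, Set.mem_setOf_eq, hcoe]
    intro i hi
    have h2 := (hh (u⁻¹ i)).2
    apply h2
    rw [show h (u⁻¹ i) = (h * u⁻¹) i from rfl, hi]
    simp
end

section
/- For every q ≥ 1 and n ≥ 5, the clique number of AΓ_n^q equals n. -/
open Equiv Equiv.Perm

lemma sign_addRight_one (m : ℕ) :
    Equiv.Perm.sign (Equiv.addRight (1 : Fin (m+1))) = (-1)^m := by
  have h : Equiv.addRight (1 : Fin (m+1)) = finRotate (m+1) :=
    Equiv.ext fun x => by simp [finRotate_succ_apply]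
  rw [h, sign_finRotate, Nat.add_sub_cancel]

open Fin.CommRing in
lemma sign_addRight {m : ℕ} (t : Fin (m+1)) :
    Equiv.Perm.sign (Equiv.addRight t) = ((-1)^m)^(t.val) := by
  conv_lhs => rw [← Fin.cast_val_eq_self t]
  have : ((t.val : Fin (m+1))) = t.val • (1 : Fin (m+1)) := by
    simp [nsmul_eq_mul]
  rw [this, ← Equiv.nsmul_addRight, map_pow, sign_addRight_one]

lemma transport {X : Type} [DecidableEq X] [Fintype X] {n : ℕ} (e : X ≃ Fin n)
    (F : X → Equiv.Perm X) (h1 : ∀ i, Equiv.Perm.sign (F i) = 1)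
    (h2 : ∀ i j, i ≠ j → ∀ x, F i x ≠ F j x) :
    ∃ f : Fin n → Equiv.Perm (Fin n),
      (∀ i, Equiv.Perm.sign (f i) = 1) ∧ ∀ i j, i ≠ j → ∀ x, f i x ≠ f j x := by
  refine ⟨fun i => e.permCongr (F (e.symm i)), fun i => by simp [h1], fun i j hij x => ?_⟩
  have hne : e.symm i ≠ e.symm j := fun h => hij (by simpa using congrArg e h)
  have := h2 _ _ hne (e.symm x)
  simp only [Equiv.permCongr_apply]
  exact fun h => this (e.injective h)

lemma exists_good (n : ℕ) (hn : 5 ≤ n) :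
    ∃ f : Fin n → Equiv.Perm (Fin n),
      (∀ i, Equiv.Perm.sign (f i) = 1) ∧ ∀ i j, i ≠ j → ∀ x, f i x ≠ f j x := by
  rcases Nat.even_or_odd n with hpar | hpar
  · -- n even, n = 2*(m+1), m ≥ 2
    obtain ⟨c, hc⟩ := hpar
    obtain ⟨m, hm2, rfl⟩ : ∃ m, 2 ≤ m ∧ n = 2*(m+1) := ⟨c - 1, by omega, by omega⟩
    set μ : Equiv.Perm (Fin (m+1)) :=
      if m % 2 = 0 then Equiv.swap ⟨0, by omega⟩ ⟨1, by omega⟩ else 1 with hμ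
    set gg : Fin 2 → Equiv.Perm (Fin (m+1)) := fun x => if x = 1 then μ else 1 with hgg
    set F : (Fin 2 × Fin (m+1)) → Equiv.Perm (Fin 2 × Fin (m+1)) := fun p =>
      (Equiv.prodCongrRight (fun x => ((if p.1 = 1 then gg x else 1)).trans
        (Equiv.addRight p.2))).trans
      (Equiv.prodCongrLeft (fun _ => Equiv.addRight p.1)) with hF
    have hFapp : ∀ p x y, F p (x, y) = (x + p.1, (if p.1 = 1 then gg x else 1) y + p.2) := by
      intro p x y
      simp [hF, Equiv.prodCongrRight_apply, Equiv.prodCongrLeft_apply]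
    have hsign2 : Equiv.Perm.sign (Equiv.addRight (1 : Fin 2)) = -1 := by
      have h : Equiv.addRight (1 : Fin 2) = Equiv.swap 0 1 := by
        apply Equiv.ext; decide
      rw [h, Equiv.Perm.sign_swap (by decide)]
    refine transport finProdFinEquiv F ?_ ?_
    · -- signs
      rintro ⟨ε, t⟩
      have hmul : F (ε, t) = (Equiv.prodCongrLeft (fun _ : Fin (m+1) => Equiv.addRight ε)) *
          (Equiv.prodCongrRight (fun x => ((if ε = 1 then gg x else 1)).trans
            (Equiv.addRight t))) := rfl
      have hsq : Equiv.Perm.sign (Equiv.addRight t) * Equiv.Perm.sign (Equiv.addRight t) = 1 :=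
        Int.units_mul_self _
      have sign_trans : ∀ (a b : Equiv.Perm (Fin (m+1))),
          Equiv.Perm.sign (a.trans b) = Equiv.Perm.sign a * Equiv.Perm.sign b := fun a b => by
        rw [show a.trans b = b * a from rfl, map_mul, mul_comm]
      have hA : Equiv.Perm.sign (Equiv.prodCongrLeft
          (fun _ : Fin (m+1) => Equiv.addRight ε)) = (Equiv.Perm.sign (Equiv.addRight ε))^(m+1) := by
        rw [sign_prodCongrLeft, Finset.prod_const, Finset.card_univ, Fintype.card_fin]
      have hB : Equiv.Perm.sign (Equiv.prodCongrRight (fun x => ((if ε = 1 then gg x else 1)).trans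
          (Equiv.addRight t))) = Equiv.Perm.sign (if ε = 1 then gg 0 else 1) *
            Equiv.Perm.sign (if ε = 1 then gg 1 else 1) := by
        rw [sign_prodCongrRight, Fin.prod_univ_two, sign_trans, sign_trans,
          mul_mul_mul_comm, hsq, mul_one]
      rw [hmul, map_mul, hA, hB]
      rcases (by decide : ∀ z : Fin 2, z = 0 ∨ z = 1) ε with rfl | rfl
      · simp only [show ¬((0 : Fin 2) = 1) from by decide, if_false, map_one, one_mul, mul_one,
          Equiv.addRight_zero, one_pow]
      · simp only [if_true, hgg, show ¬((0 : Fin 2) = 1) from by decide, if_false,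
          if_true, map_one, one_mul, hsign2]
        rcases Nat.even_or_odd m with hme | hmo
        · rw [hμ, if_pos (Nat.even_iff.mp hme), Equiv.Perm.sign_swap (by
            exact Fin.ne_of_val_ne (by simp)), (Odd.neg_one_pow (Even.add_one hme))]
          decide
        · rw [hμ, if_neg (by simp [Nat.odd_iff.mp hmo]), map_one,
            (Even.neg_one_pow (Odd.add_one hmo)), mul_one]
    · -- discordance
      rintro ⟨ε, t⟩ ⟨ε', t'⟩ hne ⟨x, y⟩
      rw [hFapp, hFapp]
      intro h
      rw [Prod.mk.injEq] at h
      rcases eq_or_ne ε ε' with rfl | hee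
      · apply hne
        rw [Prod.mk.injEq]
        refine ⟨rfl, ?_⟩
        have h2 := h.2
        exact add_left_cancel (a := (if ε = 1 then gg x else 1) y)
          (by rw [h2])
      · exact hee (add_right_injective x h.1)
  · -- n odd
    obtain ⟨m, rfl⟩ : ∃ m, n = m + 1 := ⟨n - 1, by omega⟩
    have hme : Even m := by
      rcases hpar with ⟨k, hk⟩; exact ⟨k, by omega⟩
    refine ⟨fun t => Equiv.addRight t, fun t => by
      rw [sign_addRight, hme.neg_one_pow, one_pow], fun i j hij x h => ?_⟩
    simp only [Equiv.coe_addRight] at h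
    exact hij (add_left_cancel (a := x) h)

/-- the clique number of `AΓ_n^q` equals `n` for `q ≥ 1`, `n ≥ 5`. -/
theorem AGamma_pow_cliqueNum (n q : ℕ) (hq : 1 ≤ q) (hn : 5 ≤ n) :
    (AGamma n q).cliqueNum = n := by
  have hn0 : 0 < n := by omega
  set k₀ : Fin q := ⟨0, hq⟩
  set z₀ : Fin n := ⟨0, hn0⟩
  apply le_antisymm
  · -- upper bound
    obtain ⟨s, hs⟩ := (AGamma n q).exists_isNClique_cliqueNum
    rw [← hs.card_eq]
    have : s.card ≤ (Finset.univ : Finset (Fin n)).card := by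
      apply Finset.card_le_card_of_injOn (fun σ => (σ k₀ : Equiv.Perm (Fin n)) z₀)
        (fun _ _ => Finset.mem_univ _)
      intro σ hσ τ hτ h
      by_contra hne
      have hadj := hs.isClique (Finset.mem_coe.mpr hσ) (Finset.mem_coe.mpr hτ) hne
      have hder := hadj.2 k₀ ((τ k₀ : Equiv.Perm (Fin n)) z₀)
      apply hder
      simp only [Subgroup.coe_mul, InvMemClass.coe_inv, Equiv.Perm.mul_apply,
        Equiv.Perm.coe_inv, Equiv.symm_apply_apply]
      exact h
    simpa using this
  · -- lower bound
    obtain ⟨f, hsign, hdisc⟩ := exists_good n hn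
    set F : Fin n → (Fin q → alternatingGroup (Fin n)) :=
      fun i _ => ⟨f i, Equiv.Perm.mem_alternatingGroup.mpr (hsign i)⟩ with hFdef
    have hFinj : Function.Injective F := by
      intro i j h
      by_contra hne
      have := congrFun h k₀
      rw [Subtype.ext_iff] at this
      exact hdisc i j hne z₀ (by rw [show f i = f j from this])
    have hclique : (AGamma n q).IsNClique n (Finset.univ.image F) := by
      constructor
      · rintro u hu w hw hne
        simp only [Finset.coe_image, Set.mem_image, Finset.coe_univ, Set.image_univ,
          Set.mem_range] at hu hw
        obtain ⟨i, rfl⟩ := hu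
        obtain ⟨j, rfl⟩ := hw
        have hij : i ≠ j := fun h => hne (by rw [h])
        refine ⟨hne, fun k => ?_⟩
        intro x
        simp only [hFdef, MulMemClass.mk_mul_mk, Subgroup.coe_mul, InvMemClass.coe_inv,
          Equiv.Perm.mul_apply]
        show (f i) (((f j) : Equiv.Perm (Fin n))⁻¹ x) ≠ x
        have := hdisc i j hij (((f j) : Equiv.Perm (Fin n))⁻¹ x)
        simpa only [Equiv.Perm.coe_inv, Equiv.apply_symm_apply] using this
      · rw [Finset.card_image_of_injective _ hFinj, Finset.card_univ, Fintype.card_fin]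
    have := SimpleGraph.IsClique.card_le_cliqueNum (tc := hclique.isClique)
    rwa [hclique.card_eq] at this
end

section
/- Let q ≥ 1 and n ≥ 5, and let φ be an automorphism of AΓ_n^q. If φ(B_{i,j}^{(k)}) = B_{i,j}^{(k)} (as sets of vertices) for every i, j ∈ {1,…,n} and every k ∈ {1,…,q}, then φ is the identity map. -/
/-- an automorphism of `AΓ_n^q` fixing every `B_{i,j}^{(k)}` setwise is
the identity. -/
theorem AGamma_pow_aut_faithful_on_B (n q : ℕ) (hq : 1 ≤ q) (hn : 5 ≤ n)
    (φ : (AGamma n q) ≃g (AGamma n q))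
    (h : ∀ (i j : Fin n) (k : Fin q), (fun σ => φ σ) '' B n q i j k = B n q i j k) :
    ∀ σ, φ σ = σ := by
  intro σ
  funext k
  have key : ∀ i : Fin n, ((φ σ) k : Equiv.Perm (Fin n)) i = (σ k : Equiv.Perm (Fin n)) i := by
    intro i
    have hmem : σ ∈ B n q i ((σ k : Equiv.Perm (Fin n)) i) k := rfl
    have himg := h i ((σ k : Equiv.Perm (Fin n)) i) k
    have hφ : φ σ ∈ B n q i ((σ k : Equiv.Perm (Fin n)) i) k := by
      rw [← himg]; exact ⟨σ, hmem, rfl⟩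
    exact hφ
  exact Subtype.ext (Equiv.ext key)
end

section
/- Let q ≥ 1 and n ≥ 5. For i, j, i', j' ∈ {1,…,n} and k, k' ∈ {1,…,q}, the intersection B_{i,j}^{(k)} ∩ B_{i',j'}^{(k')} is empty if and only if k = k' and exactly one of the equalities i = i' and j = j' holds. -/
lemma exists_even_two (n : ℕ) (hn : 5 ≤ n) (i j i' j' : Fin n)
    (hii : i ≠ i') (hjj : j ≠ j') :
    ∃ g : alternatingGroup (Fin n), (g : Equiv.Perm (Fin n)) i = j ∧
      (g : Equiv.Perm (Fin n)) i' = j' := by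
  classical
  set x : Fin n := Equiv.swap i j i' with hx
  have hxj : x ≠ j := by
    intro h
    rw [hx] at h
    rcases eq_or_ne i' i with h1 | h1
    · exact hii h1.symm
    · rcases eq_or_ne i' j with h2 | h2
      · simp [h2, Equiv.swap_apply_right] at h
        exact hii (h ▸ h2).symm
      · rw [Equiv.swap_apply_of_ne_of_ne h1 h2] at h
        exact h2 h
  set π : Equiv.Perm (Fin n) := Equiv.swap x j' * Equiv.swap i j with hπ
  have hπi : π i = j := by
    rw [hπ]
    simp only [Equiv.Perm.mul_apply, Equiv.swap_apply_left]
    exact Equiv.swap_apply_of_ne_of_ne hxj.symm hjj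
  have hπi' : π i' = j' := by
    rw [hπ]
    simp only [Equiv.Perm.mul_apply, ← hx, Equiv.swap_apply_left]
  -- find two points a b outside {j, j'}
  have hcard : 1 < (({j, j'}ᶜ : Finset (Fin n))).card := by
    have h1 : ({j, j'} : Finset (Fin n)).card ≤ 2 := Finset.card_insert_le _ _ |>.trans (by simp)
    have h2 : (({j, j'}ᶜ : Finset (Fin n))).card = n - ({j, j'} : Finset (Fin n)).card := by
      rw [Finset.card_compl, Fintype.card_fin]
    omega
  obtain ⟨a, ha, b, hb, hab⟩ := Finset.one_lt_card.mp hcard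
  simp only [Finset.mem_compl, Finset.mem_insert, Finset.mem_singleton, not_or] at ha hb
  rcases Int.units_eq_one_or (Equiv.Perm.sign π) with hs | hs
  · exact ⟨⟨π, Equiv.Perm.mem_alternatingGroup.mpr hs⟩, hπi, hπi'⟩
  · refine ⟨⟨Equiv.swap a b * π, Equiv.Perm.mem_alternatingGroup.mpr ?_⟩, ?_, ?_⟩
    · simp [hs, Equiv.Perm.sign_swap hab]
    · simp only [Equiv.Perm.mul_apply, hπi]
      exact Equiv.swap_apply_of_ne_of_ne (Ne.symm ha.1) (Ne.symm hb.1)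
    · simp only [Equiv.Perm.mul_apply, hπi']
      exact Equiv.swap_apply_of_ne_of_ne (Ne.symm ha.2) (Ne.symm hb.2)

lemma exists_even_one (n : ℕ) (hn : 5 ≤ n) (i j : Fin n) :
    ∃ g : alternatingGroup (Fin n), (g : Equiv.Perm (Fin n)) i = j := by
  have h5 : Nontrivial (Fin n) := Fin.nontrivial_iff_two_le.mpr (by omega)
  obtain ⟨i', hi'⟩ := exists_ne i
  obtain ⟨j', hj'⟩ := exists_ne j
  obtain ⟨g, hg, -⟩ := exists_even_two n hn i j i' j' (Ne.symm hi') (Ne.symm hj')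
  exact ⟨g, hg⟩

/-- `B_{i,j}^{(k)} ∩ B_{i',j'}^{(k')} = ∅` iff `k = k'` and exactly one of
`i = i'`, `j = j'` holds. -/
theorem B_inter_empty_iff (n q : ℕ) (hq : 1 ≤ q) (hn : 5 ≤ n)
    (i j i' j' : Fin n) (k k' : Fin q) :
    B n q i j k ∩ B n q i' j' k' = ∅ ↔ (k = k' ∧ Xor' (i = i') (j = j')) := by
  classical
  constructor
  · intro hemp
    by_contra hcon
    rw [not_and_or] at hcon
    have : ∃ σ, σ ∈ B n q i j k ∩ B n q i' j' k' := by
      rcases hcon with hk | hx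
      · obtain ⟨g, hg⟩ := exists_even_one n hn i j
        obtain ⟨g', hg'⟩ := exists_even_one n hn i' j'
        set f : Fin q → alternatingGroup (Fin n) :=
          Function.update (Function.update (fun _ => 1) k g) k' g' with hf
        refine ⟨f, ?_, ?_⟩
        · show ((f k : alternatingGroup (Fin n)) : Equiv.Perm (Fin n)) i = j
          rw [hf, Function.update_of_ne hk, Function.update_self]
          exact hg
        · show ((f k' : alternatingGroup (Fin n)) : Equiv.Perm (Fin n)) i' = j'
          rw [hf, Function.update_self]
          exact hg'
      · rw [Xor', xor_iff_not_iff'] at hx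
        push_neg at hx
        rcases hx with ⟨hi, hj⟩ | ⟨hi, hj⟩
        · obtain ⟨g, hg, hg'⟩ := exists_even_two n hn i j i' j' hi hj
          exact ⟨fun _ => g, hg, hg'⟩
        · obtain ⟨g, hg⟩ := exists_even_one n hn i j
          exact ⟨fun _ => g, hg, by subst hi; subst hj; exact hg⟩
    obtain ⟨σ, hσ⟩ := this
    rw [hemp] at hσ
    exact hσ
  · rintro ⟨hk, hx⟩
    subst hk
    ext σ
    simp only [Set.mem_inter_iff, Set.mem_empty_iff_false, iff_false, not_and]
    intro h1 h2
    have h1 : (σ k : Equiv.Perm (Fin n)) i = j := h1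
    have h2 : (σ k : Equiv.Perm (Fin n)) i' = j' := h2
    rcases hx with ⟨hi, hj⟩ | ⟨hj, hi⟩
    · subst hi
      exact hj (h1 ▸ h2 ▸ rfl)
    · subst hj
      exact hi ((σ k : Equiv.Perm (Fin n)).injective (h1.trans h2.symm))
end
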